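/- For all reals A, B > 1 there exists a constant C_{A,B} > 1 such that: for every d ≥ 1 and every real polynomial P of degree d, if |P(n)| ≤ A^n and |P(−n)| ≤ B^n for every integer n with 0 ≤ n ≤ C_{A,B}·d, then |P(n)| ≤ A^n for every natural number n and |P(−n)| ≤ B^n for every natural number n. -/
import Mathlib

open Finset Polynomial

lemma nat_prod_sub (k : ℕ) : ∏ j ∈ Finset.range k, (k - j) = k.factorial := by
  rw [← Finset.prod_range_reflect]
  rw [← Finset.prod_range_add_one_eq_factorial]
  refine Finset.prod_congr rfl fun j hj => ?_
  rw [Finset.mem_range] at hj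
  omega

lemma prod_abs_sub (d k : ℕ) (hk : k ≤ d) :
    ∏ j ∈ (Finset.range (d+1)).erase k, |(k:ℝ) - (j:ℝ)|
      = (Nat.factorial k) * (Nat.factorial (d - k)) := by
  have hsplit : (Finset.range (d+1)).erase k = Finset.range k ∪ Finset.Ico (k+1) (d+1) := by
    ext j
    simp only [Finset.mem_erase, Finset.mem_range, Finset.mem_union, Finset.mem_Ico]
    omega
  have hdisj : Disjoint (Finset.range k) (Finset.Ico (k+1) (d+1)) := by
    simp only [Finset.disjoint_left, Finset.mem_range, Finset.mem_Ico]
    omega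
  rw [hsplit, Finset.prod_union hdisj]
  have h1 : ∏ j ∈ Finset.range k, |(k:ℝ) - (j:ℝ)| = (k.factorial : ℝ) := by
    have hc : ∀ j ∈ Finset.range k, |(k:ℝ) - (j:ℝ)| = ((k - j : ℕ) : ℝ) := by
      intro j hj
      rw [Finset.mem_range] at hj
      rw [Nat.cast_sub hj.le, abs_of_nonneg]
      have : (j:ℝ) ≤ k := by exact_mod_cast hj.le
      linarith
    rw [Finset.prod_congr rfl hc, ← Nat.cast_prod, nat_prod_sub]
  have h2 : ∏ j ∈ Finset.Ico (k+1) (d+1), |(k:ℝ) - (j:ℝ)| = ((d - k).factorial : ℝ) := by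
    rw [Finset.prod_Ico_eq_prod_range]
    have hc : ∀ i ∈ Finset.range (d + 1 - (k+1)), |(k:ℝ) - ((k+1+i : ℕ):ℝ)| = ((i+1 : ℕ) : ℝ) := by
      intro i _
      push_cast
      rw [abs_of_nonpos]
      · ring
      · have : (0:ℝ) ≤ i := Nat.cast_nonneg i
        linarith
    rw [Finset.prod_congr rfl hc, ← Nat.cast_prod, Finset.prod_range_add_one_eq_factorial]
    congr 2
    omega
  rw [h1, h2]

lemma pow_self_le_factorial_mul_exp (d : ℕ) :
    (d:ℝ) ^ d ≤ (d.factorial : ℝ) * Real.exp 1 ^ d := by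
  induction d with
  | zero => simp
  | succ d ih =>
    rcases Nat.eq_zero_or_pos d with rfl | hd
    · simpa using Real.one_le_exp zero_le_one
    have hd' : (0:ℝ) < d := by exact_mod_cast hd
    have key : ((d:ℝ) + 1) ^ d ≤ (d:ℝ) ^ d * Real.exp 1 := by
      have h1 : (d:ℝ) + 1 = d * (1 + 1/d) := by field_simp
      have h2 : (1 + 1/(d:ℝ)) ^ d ≤ Real.exp 1 := by
        have h3 : 1 + 1/(d:ℝ) ≤ Real.exp (1/d) := by
          have := Real.add_one_le_exp (1/(d:ℝ)); linarith
        calc (1 + 1/(d:ℝ)) ^ d ≤ Real.exp (1/d) ^ d := by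
              apply pow_le_pow_left₀ (by positivity) h3
          _ = Real.exp 1 := by
              rw [← Real.exp_nat_mul]
              congr 1
              field_simp
      calc ((d:ℝ) + 1) ^ d = (d:ℝ) ^ d * (1 + 1/d) ^ d := by rw [h1, mul_pow]
        _ ≤ (d:ℝ) ^ d * Real.exp 1 := by
            apply mul_le_mul_of_nonneg_left h2 (by positivity)
    calc ((d+1:ℕ) : ℝ) ^ (d+1) = ((d:ℝ)+1) * ((d:ℝ)+1) ^ d := by push_cast; rw [pow_succ]; ring
      _ ≤ ((d:ℝ)+1) * ((d:ℝ) ^ d * Real.exp 1) := by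
          apply mul_le_mul_of_nonneg_left key (by positivity)
      _ ≤ ((d:ℝ)+1) * (((d.factorial : ℝ) * Real.exp 1 ^ d) * Real.exp 1) := by
          apply mul_le_mul_of_nonneg_left _ (by positivity)
          apply mul_le_mul_of_nonneg_right ih (Real.exp_pos 1).le
      _ = ((d+1).factorial : ℝ) * Real.exp 1 ^ (d+1) := by
          rw [Nat.factorial_succ]
          push_cast
          ring

lemma exists_C (A : ℝ) (hA : 1 < A) :
    ∃ C : ℝ, 2 ≤ C ∧ ∀ t : ℝ, C ≤ t → 2 * A * Real.exp 1 * t ≤ A ^ t := by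
  have hL : 0 < Real.log A := Real.log_pos hA
  refine ⟨max 2 (8 * A * Real.exp 1 / (Real.log A)^2), le_max_left _ _, fun t ht => ?_⟩
  have ht2 : (2:ℝ) ≤ t := le_trans (le_max_left _ _) ht
  have ht8 : 8 * A * Real.exp 1 / (Real.log A)^2 ≤ t := le_trans (le_max_right _ _) ht
  have htpos : (0:ℝ) < t := by linarith
  have hx : 0 ≤ t * Real.log A := by positivity
  have hexp : (t * Real.log A)^2 / 4 ≤ A ^ t := by
    rw [Real.rpow_def_of_pos (by linarith : (0:ℝ) < A)]
    have h1 : Real.exp (Real.log A * t) = (Real.exp (t * Real.log A / 2))^2 := by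
      rw [sq, ← Real.exp_add]
      ring_nf
    rw [h1]
    have h2 : 1 + t * Real.log A / 2 ≤ Real.exp (t * Real.log A / 2) := by
      linarith [Real.add_one_le_exp (t * Real.log A / 2)]
    nlinarith [Real.exp_pos (t * Real.log A / 2), sq_nonneg (t * Real.log A / 2 - 1)]
  have : 2 * A * Real.exp 1 * t ≤ (t * Real.log A)^2 / 4 := by
    have h8 : 8 * A * Real.exp 1 ≤ t * (Real.log A)^2 := by
      rw [div_le_iff₀ (by positivity)] at ht8
      linarith
    nlinarith
  linarith

lemma key_bound (A C : ℝ) (hA : 1 < A) (hC2 : 2 ≤ C)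
    (hC : ∀ t : ℝ, C ≤ t → 2 * A * Real.exp 1 * t ≤ A ^ t)
    (d : ℕ) (hd : 1 ≤ d) (Q : Polynomial ℝ) (hQ : Q.natDegree = d)
    (h : ∀ n : ℕ, (n : ℝ) ≤ C * d → |Q.eval (n:ℝ)| ≤ A ^ n) :
    ∀ n : ℕ, |Q.eval (n:ℝ)| ≤ A ^ n := by
  intro n
  by_cases hn : (n:ℝ) ≤ C * d
  · exact h n hn
  push_neg at hn
  have hA0 : (0:ℝ) < A := by linarith
  have hd0 : (0:ℝ) < d := by exact_mod_cast hd
  have hdn : (d:ℝ) < n := by nlinarith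
  have hn0 : (0:ℝ) < n := by linarith
  set v : ℕ → ℝ := fun i => (i:ℝ) with hv
  have hinj : Set.InjOn v (Finset.range (d+1)) := fun a _ b _ hab => Nat.cast_injective hab
  have hdeg : Q.degree < (Finset.range (d+1)).card := by
    rw [Finset.card_range]
    refine lt_of_le_of_lt Q.degree_le_natDegree ?_
    rw [hQ]
    exact_mod_cast Nat.lt_succ_self d
  have hrep := Lagrange.eq_interpolate hinj hdeg
  have heval : Q.eval (n:ℝ) = ∑ k ∈ Finset.range (d+1),
      Q.eval (k:ℝ) * ((Lagrange.basis (Finset.range (d+1)) v k).eval (n:ℝ)) := by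
    conv_lhs => rw [hrep]
    rw [Lagrange.interpolate_apply, Polynomial.eval_finset_sum]
    simp [Polynomial.eval_mul, hv]
  -- bound on each basis polynomial
  have hbasis : ∀ k ∈ Finset.range (d+1),
      |(Lagrange.basis (Finset.range (d+1)) v k).eval (n:ℝ)|
        ≤ ((k.factorial * (d-k).factorial : ℕ) : ℝ)⁻¹ * (n:ℝ)^d := by
    intro k hk
    rw [Finset.mem_range] at hk
    have hkd : k ≤ d := Nat.lt_succ_iff.mp hk
    rw [Lagrange.basis, Polynomial.eval_prod, Finset.abs_prod]
    have hterm : ∀ j ∈ (Finset.range (d+1)).erase k,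
        |(Lagrange.basisDivisor (v k) (v j)).eval (n:ℝ)|
          = |(k:ℝ) - (j:ℝ)|⁻¹ * |(n:ℝ) - (j:ℝ)| := by
      intro j hj
      rw [Lagrange.basisDivisor]
      simp [hv, abs_mul, abs_inv]
    rw [Finset.prod_congr rfl hterm, Finset.prod_mul_distrib, Finset.prod_inv_distrib,
      prod_abs_sub d k hkd]
    push_cast
    have hprod : (∏ j ∈ (Finset.range (d+1)).erase k, |(n:ℝ) - (j:ℝ)|) ≤ (n:ℝ)^d := by
      calc ∏ j ∈ (Finset.range (d+1)).erase k, |(n:ℝ) - (j:ℝ)|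
            ≤ ∏ _j ∈ (Finset.range (d+1)).erase k, (n:ℝ) := by
              apply Finset.prod_le_prod (fun j _ => abs_nonneg _)
              intro j hj
              have hj' : j < d + 1 := Finset.mem_range.mp (Finset.mem_of_mem_erase hj)
              have hjn : (j:ℝ) ≤ n := by
                have : (j:ℝ) ≤ d := by exact_mod_cast Nat.lt_succ_iff.mp hj'
                linarith
              rw [abs_of_nonneg (by linarith)]
              have : (0:ℝ) ≤ j := Nat.cast_nonneg j
              linarith
          _ = (n:ℝ)^d := by
              rw [Finset.prod_const, Finset.card_erase_of_mem (Finset.mem_range.mpr hk),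
                Finset.card_range]
              norm_num
    exact mul_le_mul_of_nonneg_left hprod (by positivity)
  -- sum bound
  have hsum : |Q.eval (n:ℝ)| ≤ A^d * (n:ℝ)^d * 2^d / (d.factorial : ℝ) := by
    rw [heval]
    calc |∑ k ∈ Finset.range (d+1), Q.eval (k:ℝ) * ((Lagrange.basis (Finset.range (d+1)) v k).eval (n:ℝ))|
        ≤ ∑ k ∈ Finset.range (d+1), |Q.eval (k:ℝ)| * |((Lagrange.basis (Finset.range (d+1)) v k).eval (n:ℝ))| := by
          refine (Finset.abs_sum_le_sum_abs _ _).trans ?_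
          apply le_of_eq
          exact Finset.sum_congr rfl fun k _ => abs_mul _ _
      _ ≤ ∑ k ∈ Finset.range (d+1), A^d * ((n:ℝ)^d * ((d.choose k : ℝ) / (d.factorial : ℝ))) := by
          apply Finset.sum_le_sum
          intro k hk
          have hkd : k ≤ d := Nat.lt_succ_iff.mp (Finset.mem_range.mp hk)
          have h1 : |Q.eval (k:ℝ)| ≤ A^d := by
            refine (h k ?_).trans (pow_le_pow_right₀ hA.le hkd)
            calc (k:ℝ) ≤ d := by exact_mod_cast hkd
              _ ≤ C * d := by nlinarith
          have hck : ((k.factorial * (d-k).factorial : ℕ) : ℝ)⁻¹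
              = (d.choose k : ℝ) / (d.factorial : ℝ) := by
            have hc := Nat.choose_mul_factorial_mul_factorial hkd
            have hc' : (d.choose k : ℝ) * ((k.factorial : ℝ) * ((d-k).factorial : ℝ))
                = (d.factorial : ℝ) := by
              exact_mod_cast congrArg (Nat.cast : ℕ → ℝ) (by rw [← hc]; ring)
            have hne1 : (k.factorial : ℝ) ≠ 0 := by positivity
            have hne2 : ((d-k).factorial : ℝ) ≠ 0 := by positivity
            have hne3 : (d.factorial : ℝ) ≠ 0 := by positivity
            push_cast
            rw [eq_div_iff hne3, ← hc']
            field_simp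
          calc |Q.eval (k:ℝ)| * |((Lagrange.basis (Finset.range (d+1)) v k).eval (n:ℝ))|
              ≤ A^d * (((k.factorial * (d-k).factorial : ℕ) : ℝ)⁻¹ * (n:ℝ)^d) := by
                apply mul_le_mul h1 (hbasis k hk) (abs_nonneg _) (by positivity)
            _ = A^d * ((n:ℝ)^d * ((d.choose k : ℝ) / (d.factorial : ℝ))) := by
                rw [hck]; ring
      _ = A^d * (n:ℝ)^d * 2^d / (d.factorial : ℝ) := by
          rw [← Finset.mul_sum, ← Finset.mul_sum, ← Finset.sum_div]
          rw [show (∑ k ∈ Finset.range (d+1), (d.choose k : ℝ)) = ((2:ℝ)^d) by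
            exact_mod_cast congrArg (Nat.cast : ℕ → ℝ) (Nat.sum_range_choose d)]
          ring
  -- final estimate
  have hfac : ((d.factorial : ℝ))⁻¹ ≤ Real.exp 1 ^ d / (d:ℝ)^d := by
    rw [inv_eq_one_div, div_le_div_iff₀ (by positivity) (by positivity)]
    have := pow_self_le_factorial_mul_exp d
    nlinarith
  have hmain : A^d * (n:ℝ)^d * 2^d / (d.factorial : ℝ) ≤ (2 * A * Real.exp 1 * ((n:ℝ)/d))^d := by
    have heq : (2 * A * Real.exp 1 * ((n:ℝ)/d))^d
        = (A^d * (n:ℝ)^d * 2^d) * (Real.exp 1 ^ d / (d:ℝ)^d) := by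
      rw [mul_pow, mul_pow, mul_pow, div_pow]
      ring
    rw [heq, div_eq_mul_inv]
    apply mul_le_mul_of_nonneg_left hfac (by positivity)
  have ht : C ≤ (n:ℝ)/d := by
    rw [le_div_iff₀ hd0]
    linarith
  have h1 := hC _ ht
  have h2 : (2 * A * Real.exp 1 * ((n:ℝ)/d))^d ≤ (A ^ ((n:ℝ)/d))^d := by
    apply pow_le_pow_left₀ (by positivity) h1
  have h3 : (A ^ ((n:ℝ)/d))^d = A ^ n := by
    rw [← Real.rpow_natCast (A ^ ((n:ℝ)/d)) d, ← Real.rpow_mul hA0.le,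
      div_mul_cancel₀ _ (ne_of_gt hd0), Real.rpow_natCast]
  calc |Q.eval (n:ℝ)| ≤ A^d * (n:ℝ)^d * 2^d / (d.factorial : ℝ) := hsum
    _ ≤ (2 * A * Real.exp 1 * ((n:ℝ)/d))^d := hmain
    _ ≤ (A ^ ((n:ℝ)/d))^d := h2
    _ = A ^ n := h3

/-- For all `A, B > 1` there is `C_{A,B} > 1` such that any real polynomial of degree
`d ≥ 1` satisfying `|P(n)| ≤ A^n` and `|P(-n)| ≤ B^n` for all integers `0 ≤ n ≤ C_{A,B}·d`
satisfies both bounds for all `n ∈ ℕ`. -/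
theorem stmt_15 (A B : ℝ) (hA : 1 < A) (hB : 1 < B) :
    ∃ C : ℝ, 1 < C ∧
      ∀ d : ℕ, 1 ≤ d → ∀ P : Polynomial ℝ, P.natDegree = d →
        (∀ n : ℕ, (n : ℝ) ≤ C * d →
          |P.eval (n : ℝ)| ≤ A ^ n ∧ |P.eval (-(n : ℝ))| ≤ B ^ n) →
        (∀ n : ℕ, |P.eval (n : ℝ)| ≤ A ^ n) ∧
        (∀ n : ℕ, |P.eval (-(n : ℝ))| ≤ B ^ n) := by
  obtain ⟨CA, hCA2, hCA⟩ := exists_C A hA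
  obtain ⟨CB, hCB2, hCB⟩ := exists_C B hB
  refine ⟨max CA CB, by
    have := le_max_left CA CB
    linarith, ?_⟩
  intro d hd P hP hyp
  constructor
  · exact key_bound A (max CA CB) hA (le_trans hCA2 (le_max_left _ _))
      (fun t ht => hCA t ((le_max_left _ _).trans ht)) d hd P hP
      (fun n hn => (hyp n hn).1)
  · have hQdeg : (P.comp (-Polynomial.X)).natDegree = d := by
      rw [Polynomial.natDegree_comp]
      simp [hP]
    have hQeval : ∀ x : ℝ, (P.comp (-Polynomial.X)).eval x = P.eval (-x) := by
      intro x
      rw [Polynomial.eval_comp]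
      simp
    intro n
    have := key_bound B (max CA CB) hB (le_trans hCB2 (le_max_right _ _))
      (fun t ht => hCB t ((le_max_right _ _).trans ht)) d hd (P.comp (-Polynomial.X)) hQdeg
      (fun m hm => by rw [hQeval]; exact (hyp m hm).2) n
    rwa [hQeval] at this
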